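/- Let Y be a random vector in ℝ^d with ‖Y‖ ≤ 1/λ almost surely (λ > 0), m̃ = E(Y), μ > 0, β > 0. Then E[exp(μλ⟨θ, Y - m̃⟩ + (μ²λ²/(2β))‖Y - m̃‖²)] ≤ 1 + g₂(2μ)·(μ²λ²/2)·E(⟨θ, Y - m̃⟩²) + exp(2μ)·g₁(2μ²/β)·(μ²λ²/(2β))·E(‖Y - m̃‖²), for any unit vector θ. -/

import Mathlib

open MeasureTheory ProbabilityTheory
open scoped RealInnerProductSpace

noncomputable def g1 (t : ℝ) : ℝ := if t = 0 then 1 else (Real.exp t - 1) / t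

noncomputable def g2 (t : ℝ) : ℝ := if t = 0 then 1 else 2 * (Real.exp t - 1 - t) / t ^ 2

lemma exp_eq_int (a : ℝ) :
    Real.exp a = 1 + a + a ^ 2 * ∫ s in (0:ℝ)..1, (1 - s) * Real.exp (a * s) := by
  rcases eq_or_ne a 0 with rfl | ha
  · simp
  · have h : ∀ s ∈ Set.uIcc (0:ℝ) 1,
        HasDerivAt (fun s => ((1 - s) / a + 1 / a ^ 2) * Real.exp (a * s))
          ((1 - s) * Real.exp (a * s)) s := by
      intro s _
      have h1 : HasDerivAt (fun s : ℝ => Real.exp (a * s)) (Real.exp (a * s) * a) s := by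
        simpa only [mul_one] using ((hasDerivAt_id' s).const_mul a).exp
      have h2 : HasDerivAt (fun s : ℝ => (1 - s) / a + 1 / a ^ 2) (-1 / a) s := by
        exact (((hasDerivAt_id s).const_sub 1).div_const a).add_const (1 / a ^ 2)
      have := h2.mul h1
      refine this.congr_deriv ?_
      field_simp
      ring
    have hint : IntervalIntegrable (fun s => (1 - s) * Real.exp (a * s)) volume 0 1 :=
      ((by continuity : Continuous fun s : ℝ => (1 - s) * Real.exp (a * s)).intervalIntegrable 0 1)
    have key := intervalIntegral.integral_eq_sub_of_hasDerivAt h hint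
    rw [key]
    field_simp
    simp only [mul_zero, Real.exp_zero]
    ring

lemma exp_le_g2 {x c : ℝ} (hc : 0 < c) (h : |x| ≤ c) :
    Real.exp x ≤ 1 + x + x ^ 2 / 2 * g2 c := by
  have hxc : x ≤ c := (le_abs_self x).trans h
  have hI : (∫ s in (0:ℝ)..1, (1 - s) * Real.exp (x * s))
      ≤ ∫ s in (0:ℝ)..1, (1 - s) * Real.exp (c * s) := by
    apply intervalIntegral.integral_mono_on zero_le_one
      ((by continuity : Continuous fun s : ℝ => (1 - s) * Real.exp (x * s)).intervalIntegrable 0 1)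
      ((by continuity : Continuous fun s : ℝ => (1 - s) * Real.exp (c * s)).intervalIntegrable 0 1)
    intro s hs
    have h1 : 0 ≤ 1 - s := by linarith [hs.2]
    exact mul_le_mul_of_nonneg_left
      (Real.exp_le_exp.2 (mul_le_mul_of_nonneg_right hxc hs.1)) h1
  have hc2 : (c:ℝ) ^ 2 ≠ 0 := pow_ne_zero 2 hc.ne'
  have hIc : (∫ s in (0:ℝ)..1, (1 - s) * Real.exp (c * s))
      = (Real.exp c - 1 - c) / c ^ 2 := by
    have h0 := exp_eq_int c
    rw [eq_div_iff hc2]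
    linear_combination -h0
  rw [exp_eq_int x, g2, if_neg hc.ne']
  have := mul_le_mul_of_nonneg_left hI (sq_nonneg x)
  calc 1 + x + x ^ 2 * ∫ s in (0:ℝ)..1, (1 - s) * Real.exp (x * s)
      ≤ 1 + x + x ^ 2 * ∫ s in (0:ℝ)..1, (1 - s) * Real.exp (c * s) := by linarith
    _ = 1 + x + x ^ 2 / 2 * (2 * (Real.exp c - 1 - c) / c ^ 2) := by rw [hIc]; ring

lemma exp_le_g1 {v w : ℝ} (hw : 0 < w) (h0 : 0 ≤ v) (hvw : v ≤ w) :
    Real.exp v ≤ 1 + v * g1 w := by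
  have ha : 0 ≤ 1 - v / w := by rw [sub_nonneg, div_le_one hw]; exact hvw
  have hb : 0 ≤ v / w := div_nonneg h0 hw.le
  have hab : (1 - v / w) + v / w = 1 := by ring
  have key := convexOn_exp.2 (Set.mem_univ (0:ℝ)) (Set.mem_univ w) ha hb hab
  simp only [smul_eq_mul, mul_zero, zero_add, Real.exp_zero, mul_one] at key
  rw [div_mul_cancel₀ v hw.ne'] at key
  rw [g1, if_neg hw.ne']
  calc Real.exp v ≤ 1 - v / w + v / w * Real.exp w := key
    _ = 1 + v * ((Real.exp w - 1) / w) := by field_simp; ring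

lemma g1_nonneg {w : ℝ} (hw : 0 < w) : 0 ≤ g1 w := by
  rw [g1, if_neg hw.ne']
  have : 1 ≤ Real.exp w := Real.one_le_exp hw.le
  exact div_nonneg (by linarith) hw.le

lemma pointwise_bound {x v c w : ℝ} (hc : 0 < c) (hw : 0 < w)
    (hx : |x| ≤ c) (hv0 : 0 ≤ v) (hvw : v ≤ w) :
    Real.exp (x + v) ≤ 1 + x + g2 c * x ^ 2 / 2 + Real.exp c * g1 w * v := by
  have hg1 : 0 ≤ g1 w := g1_nonneg hw
  have h1 : Real.exp v ≤ 1 + v * g1 w := exp_le_g1 hw hv0 hvw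
  have h2 : Real.exp x ≤ 1 + x + x ^ 2 / 2 * g2 c := exp_le_g2 hc hx
  have hxc : Real.exp x ≤ Real.exp c := Real.exp_le_exp.2 ((le_abs_self x).trans hx)
  have hex : (0:ℝ) < Real.exp x := Real.exp_pos x
  calc Real.exp (x + v) = Real.exp x * Real.exp v := Real.exp_add x v
    _ ≤ Real.exp x * (1 + v * g1 w) := mul_le_mul_of_nonneg_left h1 hex.le
    _ = Real.exp x + Real.exp x * (v * g1 w) := by ring
    _ ≤ (1 + x + x ^ 2 / 2 * g2 c) + Real.exp c * (v * g1 w) :=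
        add_le_add h2 (mul_le_mul_of_nonneg_right hxc (mul_nonneg hv0 hg1))
    _ = 1 + x + g2 c * x ^ 2 / 2 + Real.exp c * g1 w * v := by ring

theorem exp_moment_bound {Ω : Type*} [MeasureSpace Ω]
    [IsProbabilityMeasure (ℙ : Measure Ω)] {d : ℕ}
    (Y : Ω → EuclideanSpace ℝ (Fin d)) (hYmeas : Measurable Y)
    (lam μ β : ℝ) (hlam : 0 < lam) (hμ : 0 < μ) (hβ : 0 < β)
    (hbound : ∀ᵐ ω ∂(ℙ : Measure Ω), ‖Y ω‖ ≤ 1 / lam)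
    (mt : EuclideanSpace ℝ (Fin d)) (hmt : mt = ∫ ω, Y ω)
    (θ : EuclideanSpace ℝ (Fin d)) (hθ : ‖θ‖ = 1) :
    ∫ ω, Real.exp (μ * lam * ⟪θ, Y ω - mt⟫ + μ ^ 2 * lam ^ 2 / (2 * β) * ‖Y ω - mt‖ ^ 2) ≤
      1 + g2 (2 * μ) * (μ ^ 2 * lam ^ 2 / 2) * (∫ ω, ⟪θ, Y ω - mt⟫ ^ 2) +
        Real.exp (2 * μ) * g1 (2 * μ ^ 2 / β) * (μ ^ 2 * lam ^ 2 / (2 * β)) *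
          (∫ ω, ‖Y ω - mt‖ ^ 2) := by
  have hc : (0:ℝ) < 2 * μ := by linarith
  have hw : (0:ℝ) < 2 * μ ^ 2 / β := by positivity
  -- integrability of Y
  have hY_int : Integrable Y ℙ := by
    refine (integrable_const (1 / lam)).mono' hYmeas.aestronglyMeasurable ?_
    filter_upwards [hbound] with ω h using h
  have hmt_norm : ‖mt‖ ≤ 1 / lam := by
    rw [hmt]
    calc ‖∫ ω, Y ω‖ ≤ (1 / lam) * (ℙ (Set.univ : Set Ω)).toReal :=
          norm_integral_le_of_norm_le_const hbound
      _ = 1 / lam := by simp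
  have hae : ∀ᵐ ω ∂(ℙ : Measure Ω), ‖Y ω - mt‖ ≤ 2 / lam := by
    filter_upwards [hbound] with ω h
    calc ‖Y ω - mt‖ ≤ ‖Y ω‖ + ‖mt‖ := norm_sub_le _ _
      _ ≤ 1 / lam + 1 / lam := add_le_add h hmt_norm
      _ = 2 / lam := by ring
  -- measurability
  have hXm : Measurable fun ω => ⟪θ, Y ω - mt⟫ :=
    measurable_const.inner (hYmeas.sub measurable_const)
  have hNm : Measurable fun ω => ‖Y ω - mt‖ := (hYmeas.sub measurable_const).norm
  -- a.e. bounds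
  have hXb : ∀ᵐ ω ∂(ℙ : Measure Ω), |μ * lam * ⟪θ, Y ω - mt⟫| ≤ 2 * μ := by
    filter_upwards [hae] with ω h
    have h1 : |⟪θ, Y ω - mt⟫| ≤ ‖Y ω - mt‖ := by
      simpa [hθ] using abs_real_inner_le_norm θ (Y ω - mt)
    have h2 : |⟪θ, Y ω - mt⟫| ≤ 2 / lam := h1.trans h
    rw [abs_mul, abs_of_nonneg (by positivity : (0:ℝ) ≤ μ * lam)]
    calc μ * lam * |⟪θ, Y ω - mt⟫| ≤ μ * lam * (2 / lam) := by
          exact mul_le_mul_of_nonneg_left h2 (by positivity)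
      _ = 2 * μ := by field_simp
  have hVb : ∀ᵐ ω ∂(ℙ : Measure Ω),
      μ ^ 2 * lam ^ 2 / (2 * β) * ‖Y ω - mt‖ ^ 2 ≤ 2 * μ ^ 2 / β := by
    filter_upwards [hae] with ω h
    have h2 : ‖Y ω - mt‖ ^ 2 ≤ (2 / lam) ^ 2 := by
      exact pow_le_pow_left₀ (norm_nonneg _) h 2
    calc μ ^ 2 * lam ^ 2 / (2 * β) * ‖Y ω - mt‖ ^ 2
        ≤ μ ^ 2 * lam ^ 2 / (2 * β) * (2 / lam) ^ 2 := by
          exact mul_le_mul_of_nonneg_left h2 (by positivity)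
      _ = 2 * μ ^ 2 / β := by field_simp
  -- integrability of the four integrands
  have hint_exp : Integrable (fun ω =>
      Real.exp (μ * lam * ⟪θ, Y ω - mt⟫ + μ ^ 2 * lam ^ 2 / (2 * β) * ‖Y ω - mt‖ ^ 2)) ℙ := by
    refine (integrable_const (Real.exp (2 * μ + 2 * μ ^ 2 / β))).mono'
      (Measurable.aestronglyMeasurable ?_) ?_
    · exact ((hXm.const_mul _).add ((hNm.pow_const 2).const_mul _)).exp
    · filter_upwards [hXb, hVb] with ω h1 h2
      rw [Real.norm_eq_abs, abs_of_pos (Real.exp_pos _), Real.exp_le_exp]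
      have := le_abs_self (μ * lam * ⟪θ, Y ω - mt⟫)
      linarith
  have hint_X : Integrable (fun ω => ⟪θ, Y ω - mt⟫) ℙ := by
    refine (integrable_const (2 / lam)).mono' hXm.aestronglyMeasurable ?_
    filter_upwards [hae] with ω h
    rw [Real.norm_eq_abs]
    exact le_trans (by simpa [hθ] using abs_real_inner_le_norm θ (Y ω - mt)) h
  have hint_X2 : Integrable (fun ω => ⟪θ, Y ω - mt⟫ ^ 2) ℙ := by
    refine (integrable_const ((2 / lam) ^ 2)).mono' (hXm.pow_const 2).aestronglyMeasurable ?_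
    filter_upwards [hae] with ω h
    rw [Real.norm_eq_abs, abs_pow]
    refine pow_le_pow_left₀ (abs_nonneg _) ?_ 2
    exact le_trans (by simpa [hθ] using abs_real_inner_le_norm θ (Y ω - mt)) h
  have hint_N2 : Integrable (fun ω => ‖Y ω - mt‖ ^ 2) ℙ := by
    refine (integrable_const ((2 / lam) ^ 2)).mono' (hNm.pow_const 2).aestronglyMeasurable ?_
    filter_upwards [hae] with ω h
    rw [Real.norm_eq_abs, abs_of_nonneg (by positivity)]
    exact pow_le_pow_left₀ (norm_nonneg _) h 2
  -- mean zero
  have hmean : (∫ ω, ⟪θ, Y ω - mt⟫) = 0 := by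
    have h1 : (∫ ω, ⟪θ, Y ω - mt⟫) = ⟪θ, ∫ ω, (Y ω - mt)⟫ :=
      integral_inner (hY_int.sub (integrable_const mt)) θ
    have h2 : (∫ ω, (Y ω - mt)) = 0 := by
      rw [integral_sub hY_int (integrable_const mt), integral_const]
      simp [hmt]
    rw [h1, h2, inner_zero_right]
  -- abbreviations for the RHS coefficients
  set A : ℝ := g2 (2 * μ) * (μ ^ 2 * lam ^ 2 / 2) with hA
  set B : ℝ := Real.exp (2 * μ) * g1 (2 * μ ^ 2 / β) * (μ ^ 2 * lam ^ 2 / (2 * β)) with hB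
  have hmono : ∫ ω, Real.exp (μ * lam * ⟪θ, Y ω - mt⟫ +
        μ ^ 2 * lam ^ 2 / (2 * β) * ‖Y ω - mt‖ ^ 2) ≤
      ∫ ω, (1 + μ * lam * ⟪θ, Y ω - mt⟫ + A * ⟪θ, Y ω - mt⟫ ^ 2 + B * ‖Y ω - mt‖ ^ 2) := by
    refine integral_mono_ae hint_exp ?_ ?_
    · exact (((integrable_const (1:ℝ)).add (hint_X.const_mul _)).add
        (hint_X2.const_mul A)).add (hint_N2.const_mul B)
    · filter_upwards [hXb, hVb] with ω h1 h2
      calc Real.exp (μ * lam * ⟪θ, Y ω - mt⟫ + μ ^ 2 * lam ^ 2 / (2 * β) * ‖Y ω - mt‖ ^ 2)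
          ≤ 1 + μ * lam * ⟪θ, Y ω - mt⟫ +
              g2 (2 * μ) * (μ * lam * ⟪θ, Y ω - mt⟫) ^ 2 / 2 +
              Real.exp (2 * μ) * g1 (2 * μ ^ 2 / β) *
                (μ ^ 2 * lam ^ 2 / (2 * β) * ‖Y ω - mt‖ ^ 2) :=
            pointwise_bound hc hw h1 (by positivity) h2
        _ = 1 + μ * lam * ⟪θ, Y ω - mt⟫ + A * ⟪θ, Y ω - mt⟫ ^ 2 + B * ‖Y ω - mt‖ ^ 2 := by
            rw [hA, hB]; ring
  have I1 : Integrable (fun ω => 1 + μ * lam * ⟪θ, Y ω - mt⟫) ℙ :=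
    (integrable_const 1).add (hint_X.const_mul _)
  have I2 : Integrable (fun ω => 1 + μ * lam * ⟪θ, Y ω - mt⟫ + A * ⟪θ, Y ω - mt⟫ ^ 2) ℙ :=
    I1.add (hint_X2.const_mul A)
  have e1 : (∫ ω, (1 + μ * lam * ⟪θ, Y ω - mt⟫ + A * ⟪θ, Y ω - mt⟫ ^ 2 +
        B * ‖Y ω - mt‖ ^ 2)) =
      (∫ ω, (1 + μ * lam * ⟪θ, Y ω - mt⟫ + A * ⟪θ, Y ω - mt⟫ ^ 2)) +
        ∫ ω, B * ‖Y ω - mt‖ ^ 2 := integral_add I2 (hint_N2.const_mul B)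
  have e2 : (∫ ω, (1 + μ * lam * ⟪θ, Y ω - mt⟫ + A * ⟪θ, Y ω - mt⟫ ^ 2)) =
      (∫ ω, (1 + μ * lam * ⟪θ, Y ω - mt⟫)) + ∫ ω, A * ⟪θ, Y ω - mt⟫ ^ 2 :=
    integral_add I1 (hint_X2.const_mul A)
  have e3 : (∫ ω, (1 + μ * lam * ⟪θ, Y ω - mt⟫)) =
      (∫ _ω : Ω, (1:ℝ)) + ∫ ω, μ * lam * ⟪θ, Y ω - mt⟫ :=
    integral_add (integrable_const 1) (hint_X.const_mul _)
  have hsplit : (∫ ω, (1 + μ * lam * ⟪θ, Y ω - mt⟫ + A * ⟪θ, Y ω - mt⟫ ^ 2 +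
        B * ‖Y ω - mt‖ ^ 2)) =
      1 + A * (∫ ω, ⟪θ, Y ω - mt⟫ ^ 2) + B * (∫ ω, ‖Y ω - mt‖ ^ 2) := by
    rw [e1, e2, e3, integral_const_mul, integral_const_mul, integral_const_mul, hmean]
    simp
  rw [hsplit] at hmono
  exact hmono
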